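/- Let m, k, p, r be natural numbers, let L_a : ℝ → ℝ (a = 1, …, k), C_α : ℝ → ℝ (α = 1, …, p) be continuous functions, let R_Γ : ℝ → ℝ (Γ = 1, …, r) satisfy the passivity condition R_Γ(x)·x > 0 for all x ≠ 0, let n^a, η^α, N^Γ ∈ ℝᵐ and c_α ∈ ℝ, and define Q_j(q,v,w) = Σ_{i=1}^{m} Σ_{a=1}^{k} n^a_j n^a_i L_a(⟨n^a, v⟩) w^i + Σ_{Γ=1}^{r} N^Γ_j R_Γ(⟨N^Γ, v⟩) + Σ_{α=1}^{p} η^α_j C_α(⟨η^α, q⟩ + c_α). Suppose there exists v* ∈ ℝᵐ such that ⟨N^Γ, v*⟩ ≠ 0 for some Γ. Then there exists no twice continuously differentiable function E : ℝᵐ × ℝᵐ → ℝ satisfying Σ_{j=1}^{m} Q_j(q,v,w) v^j = Σ_{j=1}^{m} (∂E/∂q^j)(q,v) v^j + Σ_{j=1}^{m} (∂E/∂v^j)(q,v) w^j for all q, v, w ∈ ℝᵐ. -/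

import Mathlib

/-- The Birkhoffian of an RLC network with passive current-controlled resistors is not
conservative: there is no C² energy function E with
Σ_j Q_j(q,v,w) v^j = Σ_j ∂E/∂q^j(q,v) v^j + Σ_j ∂E/∂v^j(q,v) w^j for all q, v, w,
provided some resistor actually sees a nonzero current ⟨N^Γ,v*⟩ for some v*. -/
theorem birkhoffian_not_conservative (m k p r : ℕ)
    (L : Fin k → ℝ → ℝ) (hL : ∀ a, Continuous (L a))
    (C : Fin p → ℝ → ℝ) (hC : ∀ α, Continuous (C α))
    (R : Fin r → ℝ → ℝ) (hR : ∀ Γ, ∀ x : ℝ, x ≠ 0 → R Γ x * x > 0)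
    (n : Fin k → Fin m → ℝ) (η : Fin p → Fin m → ℝ) (N : Fin r → Fin m → ℝ)
    (c : Fin p → ℝ)
    (hv : ∃ v : Fin m → ℝ, ∃ Γ, (∑ i, N Γ i * v i) ≠ 0) :
    ¬ ∃ E : (Fin m → ℝ) × (Fin m → ℝ) → ℝ, ContDiff ℝ 2 E ∧
      ∀ q v w : Fin m → ℝ,
        ∑ j, ((∑ i, (∑ a, n a j * n a i * L a (∑ s, n a s * v s)) * w i)
              + ∑ Γ, N Γ j * R Γ (∑ s, N Γ s * v s)
              + ∑ α, η α j * C α ((∑ s, η α s * q s) + c α)) * v j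
        = ∑ j, (fderiv ℝ E (q, v) (Pi.single j 1, 0)) * v j
          + ∑ j, (fderiv ℝ E (q, v) (0, Pi.single j 1)) * w j := by
  rintro ⟨E, hE, hEq⟩
  obtain ⟨v₀, Γ₀, hΓ₀⟩ := hv
  have hEd : Differentiable ℝ E := hE.differentiable two_ne_zero
  have hE' : Differentiable ℝ (fderiv ℝ E) :=
    (hE.fderiv_right (m := 1) (by norm_num)).differentiable one_ne_zero
  -- notation for the second derivative
  set f'' := fderiv ℝ (fderiv ℝ E) with hf''
  -- Step A: ∂E/∂v_i depends only on v
  have hD2 : ∀ (q v : Fin m → ℝ) (i : Fin m),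
      fderiv ℝ E (q, v) (0, Pi.single i 1)
        = ∑ j, (∑ a, n a j * n a i * L a (∑ s, n a s * v s)) * v j := by
    intro q v i
    have h1 := hEq q v (Pi.single i 1)
    have h0 := hEq q v 0
    simp only [Pi.zero_apply, mul_zero, Finset.sum_const_zero, zero_add, add_zero] at h0
    simp only [Pi.single_apply, mul_ite, mul_one, mul_zero, Finset.sum_ite_eq',
      Finset.mem_univ, if_true] at h1
    simp only [add_mul, Finset.sum_add_distrib] at h1 h0
    linarith
  -- Step B: mixed second derivative f''(u,0)(0,e_i) = 0
  have hmix : ∀ (x : (Fin m → ℝ) × (Fin m → ℝ)) (i : Fin m) (u : Fin m → ℝ),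
      f'' x (u, 0) (0, Pi.single i 1) = 0 := by
    rintro ⟨q, v⟩ i u
    set d : (Fin m → ℝ) × (Fin m → ℝ) := (0, Pi.single i 1) with hd
    have hcomp : HasFDerivAt (fun q' : Fin m → ℝ => fderiv ℝ E (q', v))
        ((f'' (q, v)).comp (ContinuousLinearMap.inl ℝ _ _)) q :=
      (hE' (q, v)).hasFDerivAt.comp q (hasFDerivAt_prodMk_left (𝕜 := ℝ) q v)
    have happ := hcomp.clm_apply (hasFDerivAt_const d q)
    have hconst : (fun q' : Fin m → ℝ => fderiv ℝ E (q', v) d)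
        = fun _ => ∑ j, (∑ a, n a j * n a i * L a (∑ s, n a s * v s)) * v j :=
      funext fun q' => hD2 q' v i
    have hz : fderiv ℝ (fun q' : Fin m → ℝ => fderiv ℝ E (q', v) d) q = 0 := by
      rw [hconst]; exact fderiv_const_apply _
    have hcand := happ.fderiv
    rw [hz] at hcand
    have := congrArg (fun T : (Fin m → ℝ) →L[ℝ] ℝ => T u) hcand.symm
    simpa using this
  -- Step C: symmetry of the second derivative
  have hsymm : ∀ (x u w : (Fin m → ℝ) × (Fin m → ℝ)), f'' x u w = f'' x w u := by
    intro x u w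
    exact second_derivative_symmetric (fun y => (hEd y).hasFDerivAt)
      ((hE' x).hasFDerivAt) u w
  -- Step D: ∂E/∂q_j depends only on q
  have hD1 : ∀ (q v : Fin m → ℝ) (j : Fin m),
      fderiv ℝ E (q, v) (Pi.single j 1, 0) = fderiv ℝ E (q, 0) (Pi.single j 1, 0) := by
    intro q v j
    set d : (Fin m → ℝ) × (Fin m → ℝ) := (Pi.single j 1, 0) with hd
    have key : ∀ v' : Fin m → ℝ,
        HasFDerivAt (fun v'' : Fin m → ℝ => fderiv ℝ E (q, v'') d) (0 : (Fin m → ℝ) →L[ℝ] ℝ) v' := by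
      intro v'
      have hcomp : HasFDerivAt (fun v'' : Fin m → ℝ => fderiv ℝ E (q, v''))
          ((f'' (q, v')).comp (ContinuousLinearMap.inr ℝ _ _)) v' :=
        (hE' (q, v')).hasFDerivAt.comp v' (hasFDerivAt_prodMk_right (𝕜 := ℝ) q v')
      have happ := hcomp.clm_apply (hasFDerivAt_const d v')
      refine happ.congr_fderiv (Eq.symm ?_)
      ext u
      simp only [ContinuousLinearMap.add_apply, ContinuousLinearMap.comp_apply,
        ContinuousLinearMap.zero_apply, map_zero, ContinuousLinearMap.flip_apply,
        ContinuousLinearMap.inr_apply, zero_add]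
      have hu : ((0, u) : (Fin m → ℝ) × (Fin m → ℝ))
          = ∑ i, u i • (((0 : Fin m → ℝ), Pi.single i (1 : ℝ)) :
              (Fin m → ℝ) × (Fin m → ℝ)) := by
        rw [Prod.ext_iff]
        refine ⟨by simp [Prod.fst_sum], ?_⟩
        rw [Prod.snd_sum]
        simp only [Prod.smul_snd]
        funext t
        simp [Finset.sum_apply, Pi.single_apply, mul_ite]
      rw [hu, map_sum]
      simp only [map_smul, ContinuousLinearMap.coe_sum', Finset.sum_apply,
        ContinuousLinearMap.coe_smul', Pi.smul_apply, smul_eq_mul]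
      refine (Finset.sum_eq_zero fun i _ => ?_).symm
      rw [hsymm (q, v') ((0 : Fin m → ℝ), Pi.single i (1 : ℝ)) d, hd,
        hmix (q, v') i (Pi.single j 1), mul_zero]
    exact is_const_of_fderiv_eq_zero (fun v' => (key v').differentiableAt)
      (fun v' => (key v').fderiv) v 0
  -- Step E: the scalar identity with w = 0, with v-independent ∂E/∂q
  have hfin : ∀ v : Fin m → ℝ,
      ∑ j, ((∑ Γ, N Γ j * R Γ (∑ s, N Γ s * v s))
            + ∑ α, η α j * C α (c α)) * v j
        = ∑ j, fderiv ℝ E (0, 0) (Pi.single j 1, 0) * v j := by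
    intro v
    have h0 := hEq 0 v 0
    simp only [Pi.zero_apply, mul_zero, Finset.sum_const_zero, zero_add, add_zero] at h0
    rw [h0]
    exact Finset.sum_congr rfl fun j _ => by rw [hD1 0 v j]
  -- sum-swap lemma
  have swap : ∀ (f : Fin r → ℝ) (v : Fin m → ℝ),
      ∑ j, (∑ Γ, N Γ j * f Γ) * v j = ∑ Γ, f Γ * (∑ i, N Γ i * v i) := by
    intro f v
    simp_rw [Finset.sum_mul, Finset.mul_sum]
    rw [Finset.sum_comm]
    exact Finset.sum_congr rfl fun Γ _ => Finset.sum_congr rfl fun j _ => by ring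
  set s : Fin r → ℝ := fun Γ => ∑ i, N Γ i * v₀ i with hs
  have h1 := hfin v₀
  have h2 := hfin (-v₀)
  -- rewrite h2's inner arguments
  have hneg : ∀ Γ : Fin r, (∑ i, N Γ i * (-v₀) i) = -(s Γ) := by
    intro Γ; simp [hs, Finset.sum_neg_distrib]
  simp only [hneg, Pi.neg_apply, mul_neg, Finset.sum_neg_distrib] at h2
  -- split sums
  simp only [add_mul, Finset.sum_add_distrib] at h1 h2
  rw [swap (fun Γ => R Γ (s Γ)) v₀] at h1
  rw [show (∑ j, (∑ Γ, N Γ j * R Γ (-s Γ)) * v₀ j) = ∑ Γ, R Γ (-s Γ) * s Γ from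
    swap (fun Γ => R Γ (-s Γ)) v₀] at h2
  -- combine: ∑ Γ, (R Γ (s Γ) * s Γ + R Γ (-s Γ) * -(s Γ)) = 0
  have hzero : ∑ Γ, (R Γ (s Γ) * s Γ + R Γ (-s Γ) * -(s Γ)) = 0 := by
    have := congrArg₂ (· + ·) h1 h2
    simp only [Finset.sum_add_distrib] at this ⊢
    simp only [mul_neg, Finset.sum_neg_distrib]
    linarith
  have hpos : 0 < ∑ Γ, (R Γ (s Γ) * s Γ + R Γ (-s Γ) * -(s Γ)) := by
    refine Finset.sum_pos' (fun Γ _ => ?_) ⟨Γ₀, Finset.mem_univ _, ?_⟩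
    · by_cases hΓ : s Γ = 0
      · simp [hΓ]
      · have h1 := hR Γ (s Γ) hΓ
        have h2 := hR Γ (-s Γ) (neg_ne_zero.mpr hΓ)
        nlinarith
    · have h1 := hR Γ₀ (s Γ₀) hΓ₀
      have h2 := hR Γ₀ (-s Γ₀) (neg_ne_zero.mpr hΓ₀)
      nlinarith
  rw [hzero] at hpos
  exact lt_irrefl 0 hpos
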